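/- Let f : [0,∞) → ℝ be continuous with liminf_{s→∞}(−f(s)·ln(s)/s²) = μ ∈ (0,∞], and let ε > 0. Then A_ε := sup{ f(s) + s + (2/(3·√(3ε)))·s^{3/2} : s > 0 } is finite. -/

import Mathlib

open Filter Real Asymptotics

theorem stmt_7 (f : ℝ → ℝ) (hf : ContinuousOn f (Set.Ici 0)) (μ : EReal) (hμ : 0 < μ)
    (hliminf : Filter.liminf (fun s : ℝ => ((-f s * Real.log s / s ^ 2 : ℝ) : EReal))
      Filter.atTop = μ)
    (ε : ℝ) (hε : 0 < ε) :
    ∃ A : ℝ, ∀ s : ℝ, 0 < s →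
      f s + s + (2 / (3 * Real.sqrt (3 * ε))) * s ^ ((3 : ℝ) / 2) ≤ A := by
  set C : ℝ := 2 / (3 * Real.sqrt (3 * ε)) with hC
  have hCpos : 0 < C := by
    apply div_pos (by norm_num)
    positivity
  -- choose real c with 0 < c < μ
  obtain ⟨c, hc0, hcμ⟩ := EReal.exists_between_coe_real hμ
  have hc0' : (0:ℝ) < c := by exact_mod_cast hc0
  -- eventually c < -f s * log s / s^2
  have hev : ∀ᶠ s in atTop, c < -f s * Real.log s / s ^ 2 := by
    have := Filter.eventually_lt_of_lt_liminf (hliminf ▸ hcμ)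
    filter_upwards [this] with s hs
    exact_mod_cast hs
  -- little-o facts
  have hlog : Real.log =o[atTop] fun s : ℝ => s ^ ((1:ℝ)/2) :=
    isLittleO_log_rpow_atTop (by norm_num)
  have hA : (fun s : ℝ => s * Real.log s) =o[atTop] fun s : ℝ => s ^ 2 := by
    have := (Asymptotics.isBigO_refl (fun s : ℝ => s) atTop).mul_isLittleO
      Real.isLittleO_log_id_atTop
    simpa [sq] using this
  have hB : (fun s : ℝ => s ^ ((3:ℝ)/2) * Real.log s) =o[atTop] fun s : ℝ => s ^ 2 := by
    have h := (Asymptotics.isBigO_refl (fun s : ℝ => s ^ ((3:ℝ)/2)) atTop).mul_isLittleO hlog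
    refine h.trans_eventuallyEq ?_
    filter_upwards [eventually_gt_atTop (0:ℝ)] with s hs
    rw [← Real.rpow_add hs, show ((3:ℝ)/2 + 1/2) = ((2:ℕ):ℝ) by norm_num, Real.rpow_natCast]
  have hO : (fun s : ℝ => (s + C * s ^ ((3:ℝ)/2)) * Real.log s) =o[atTop]
      fun s : ℝ => s ^ 2 := by
    have := hA.add (hB.const_mul_left C)
    refine this.congr' ?_ (EventuallyEq.refl _ _)
    filter_upwards with s
    ring
  have hev2 : ∀ᶠ s in atTop, (s + C * s ^ ((3:ℝ)/2)) * Real.log s ≤ c * s ^ 2 := by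
    filter_upwards [hO.def hc0', eventually_ge_atTop (0:ℝ)] with s hs hs0
    calc (s + C * s ^ ((3:ℝ)/2)) * Real.log s ≤ ‖(s + C * s ^ ((3:ℝ)/2)) * Real.log s‖ :=
          le_norm_self _
      _ ≤ c * ‖s ^ 2‖ := hs
      _ = c * s ^ 2 := by rw [Real.norm_eq_abs, abs_of_nonneg (by positivity)]
  -- eventually the expression is ≤ 0
  have hev3 : ∀ᶠ s in atTop, f s + s + C * s ^ ((3:ℝ)/2) ≤ 0 := by
    filter_upwards [hev, hev2, eventually_gt_atTop (2:ℝ)] with s h1 h2 hs2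
    have hs0 : (0:ℝ) < s := by linarith
    have hlogpos : 0 < Real.log s := Real.log_pos (by linarith)
    have h1' : c * s ^ 2 < -f s * Real.log s := (lt_div_iff₀ (by positivity)).mp h1
    have h3 : (s + C * s ^ ((3:ℝ)/2)) * Real.log s < -f s * Real.log s := lt_of_le_of_lt h2 h1'
    have h4 : s + C * s ^ ((3:ℝ)/2) < -f s := lt_of_mul_lt_mul_right h3 hlogpos.le
    linarith
  obtain ⟨S, hS⟩ := hev3.exists_forall_of_atTop
  set S' : ℝ := max S 1 with hS'
  have hS'1 : (1:ℝ) ≤ S' := le_max_right _ _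
  obtain ⟨B, hB'⟩ := (isCompact_Icc (a := (0:ℝ)) (b := S')).exists_bound_of_continuousOn
    (hf.mono (Set.Icc_subset_Ici_self))
  have hB0 : 0 ≤ B := le_trans (norm_nonneg _) (hB' 0 ⟨le_refl 0, by linarith⟩)
  refine ⟨B + S' + C * S' ^ ((3:ℝ)/2), fun s hs => ?_⟩
  rcases le_or_gt s S' with h | h
  · have hfs : f s ≤ B := le_trans (le_norm_self _) (hB' s ⟨hs.le, h⟩)
    have hrp : s ^ ((3:ℝ)/2) ≤ S' ^ ((3:ℝ)/2) :=
      Real.rpow_le_rpow hs.le h (by norm_num)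
    have := mul_le_mul_of_nonneg_left hrp hCpos.le
    linarith
  · have h0 : f s + s + C * s ^ ((3:ℝ)/2) ≤ 0 := hS s (le_trans (le_max_left _ _) h.le)
    have : 0 ≤ C * S' ^ ((3:ℝ)/2) := by positivity
    have h1 : (0:ℝ) ≤ S' ^ ((3:ℝ)/2) := by positivity
    linarith
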